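/- There exists a universal positive constant c with the following property. Let V be a nonempty finite vertex set, T ≥ 1 a natural number, and φ a probability distribution on the set of T-paths over V. Given ε, δ ∈ (0, 1), let R be a natural number with R ≥ (c / ε²)·(log₂ C(T+1, 2) + 1 + ln(1/δ)), and let p₁, …, p_R be independent random T-paths each distributed according to φ. Then with probability at least 1 − δ, simultaneously for every pair of distinct vertices u, v ∈ V, the empirical path similarity S_RP(u, v) = #{r : pᵣ ∈ P_{u,v}} / R satisfies |φ(P_{u,v}) − S_RP(u, v)| ≤ ε, where φ(P_{u,v}) is the probability that a φ-random T-path contains both u and v. -/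

import Mathlib

open Finset

set_option maxHeartbeats 1000000

namespace PantherAux

variable {α : Type} [Fintype α]


variable {α : Type} [Fintype α]

noncomputable def P (w : α → ℝ) (R : ℕ) (E : Set (Fin R → α)) : ℝ :=
  ∑ ps : Fin R → α, E.indicator (fun ps => ∏ r, w (ps r)) ps

lemma factorize (w f : α → ℝ) (R : ℕ) :
    ∑ ps : Fin R → α, ∏ r, (w (ps r) * f (ps r)) = (∑ p, w p * f p) ^ R := by
  classical
  have h : (∑ p, w p * f p) ^ R = ∏ _r : Fin R, ∑ p, w p * f p := by
    rw [Finset.prod_const, Finset.card_univ, Fintype.card_fin]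
  rw [h, Finset.prod_univ_sum, Fintype.piFinset_univ]

lemma P_nonneg (w : α → ℝ) (hw : ∀ p, 0 ≤ w p) (R : ℕ) (E : Set (Fin R → α)) :
    0 ≤ P w R E := by
  refine Finset.sum_nonneg fun ps _ => Set.indicator_nonneg (fun ps _ => ?_) ps
  exact Finset.prod_nonneg fun r _ => hw _

lemma P_add_compl (w : α → ℝ) (hw1 : ∑ p, w p = 1) (R : ℕ) (E : Set (Fin R → α)) :
    P w R E + P w R Eᶜ = 1 := by
  have h := factorize w (fun _ => 1) R
  simp only [mul_one] at h
  rw [hw1, one_pow] at h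
  calc P w R E + P w R Eᶜ
      = ∑ ps : Fin R → α, (E.indicator (fun ps => ∏ r, w (ps r)) ps
        + Eᶜ.indicator (fun ps => ∏ r, w (ps r)) ps) := by
        rw [P, P, ← Finset.sum_add_distrib]
    _ = ∑ ps : Fin R → α, ∏ r, w (ps r) := by
        refine Finset.sum_congr rfl fun ps _ => ?_
        classical
        by_cases hps : ps ∈ E
        · rw [Set.indicator_of_mem hps, Set.indicator_of_notMem (by simp [hps]), add_zero]
        · rw [Set.indicator_of_notMem hps, Set.indicator_of_mem (by simp [hps]), zero_add]
    _ = 1 := h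

lemma P_le_sum {ι : Type} (w : α → ℝ) (hw : ∀ p, 0 ≤ w p) (R : ℕ)
    (s : Finset ι) (F : ι → Set (Fin R → α)) (E : Set (Fin R → α))
    (hE : ∀ ps ∈ E, ∃ i ∈ s, ps ∈ F i) :
    P w R E ≤ ∑ i ∈ s, P w R (F i) := by
  classical
  rw [P]
  rw [show (∑ i ∈ s, P w R (F i))
      = ∑ ps : Fin R → α, ∑ i ∈ s, (F i).indicator (fun ps => ∏ r, w (ps r)) ps from
    Finset.sum_comm]
  refine Finset.sum_le_sum fun ps _ => ?_
  by_cases hps : ps ∈ E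
  · rw [Set.indicator_of_mem hps]
    obtain ⟨i, his, hFi⟩ := hE ps hps
    have h1 : (F i).indicator (fun ps => ∏ r, w (ps r)) ps = ∏ r, w (ps r) :=
      Set.indicator_of_mem hFi _
    calc (∏ r, w (ps r)) = (F i).indicator (fun ps => ∏ r, w (ps r)) ps := h1.symm
      _ ≤ ∑ i ∈ s, (F i).indicator (fun ps => ∏ r, w (ps r)) ps :=
        Finset.single_le_sum (f := fun j => (F j).indicator (fun ps => ∏ r, w (ps r)) ps)
          (fun j _ => Set.indicator_nonneg
          (fun ps _ => Finset.prod_nonneg fun r _ => hw _) ps) his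
  · rw [Set.indicator_of_notMem hps]
    exact Finset.sum_nonneg fun j _ => Set.indicator_nonneg
      (fun ps _ => Finset.prod_nonneg fun r _ => hw _) ps

lemma exp_le_quadratic {x : ℝ} (hx : |x| ≤ 1) : Real.exp x ≤ 1 + x + x ^ 2 := by
  have h := Real.exp_bound hx (by norm_num : 0 < 2)
  have hs : ∑ m ∈ Finset.range 2, x ^ m / m.factorial = 1 + x := by
    simp [Finset.sum_range_succ]
  rw [hs] at h
  have h2 : Real.exp x - (1 + x) ≤ |x| ^ 2 * ((2:ℕ).succ / ((2:ℕ).factorial * 2)) :=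
    (abs_le.1 h).2
  have h3 : |x| ^ 2 = x ^ 2 := sq_abs x
  norm_num [h3] at h2
  nlinarith

lemma mul_neg_log_le {m : ℝ} (h0 : 0 < m) (h1 : m ≤ 1) : m * (-Real.log m) ≤ 1 / 2 := by
  have hs0 : 0 < Real.sqrt m := Real.sqrt_pos.2 h0
  have hs2 : Real.sqrt m ^ 2 = m := Real.sq_sqrt h0.le
  have hs1 : Real.sqrt m ≤ 1 := Real.sqrt_le_one.2 h1
  have hls : Real.log m = 2 * Real.log (Real.sqrt m) := by
    have := Real.log_sqrt h0.le
    linarith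
  have hlog : Real.log (Real.sqrt m)⁻¹ ≤ (Real.sqrt m)⁻¹ - 1 :=
    Real.log_le_sub_one_of_pos (by positivity)
  rw [Real.log_inv] at hlog
  have hinv : Real.sqrt m * (Real.sqrt m)⁻¹ = 1 := mul_inv_cancel₀ hs0.ne'
  rw [hls]
  nlinarith [sq_nonneg (2 * Real.sqrt m - 1), mul_le_mul_of_nonneg_left hlog (sq_nonneg (Real.sqrt m)),
    mul_le_mul_of_nonneg_left hlog hs0.le]




lemma tail (w : α → ℝ) (hw : ∀ p, 0 ≤ w p) (hw1 : ∑ p, w p = 1)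
    (S : Set α) (R : ℕ) (hR : (0:ℝ) < (R:ℝ)) (t a : ℝ) (E : Set (Fin R → α))
    (hE : ∀ ps ∈ E, 0 ≤ t * ((∑ r, S.indicator (fun _ => (1:ℝ)) (ps r)) - a)) :
    P w R E ≤ Real.exp (-(t * a) + (R:ℝ) * (∑ p, S.indicator w p) * (Real.exp t - 1)) := by
  classical
  have hRne : (R:ℝ) ≠ 0 := hR.ne'
  set μ : ℝ := ∑ p, S.indicator w p with hμdef
  have hμ0 : 0 ≤ μ := Finset.sum_nonneg fun p _ => Set.indicator_nonneg (fun p _ => hw p) p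
  have hμ1 : μ ≤ 1 := by
    rw [← hw1]
    exact Finset.sum_le_sum fun p _ => Set.indicator_le_self' (fun p _ => hw p) p
  -- step 1 : dominate indicator by exponential weights
  have step1 : P w R E ≤ ∑ ps : Fin R → α,
      ∏ r, (w (ps r) * Real.exp (t * (S.indicator (fun _ => (1:ℝ)) (ps r) - a / R))) := by
    refine Finset.sum_le_sum fun ps _ => ?_
    have hprodeq : ∏ r, (w (ps r) * Real.exp (t * (S.indicator (fun _ => (1:ℝ)) (ps r) - a / R)))
        = (∏ r, w (ps r)) * Real.exp (t * ((∑ r, S.indicator (fun _ => (1:ℝ)) (ps r)) - a)) := by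
      rw [Finset.prod_mul_distrib, ← Real.exp_sum]
      congr 1
      rw [← Finset.mul_sum, Finset.sum_sub_distrib, Finset.sum_const, Finset.card_univ,
        Fintype.card_fin, nsmul_eq_mul]
      field_simp
    by_cases hps : ps ∈ E
    · rw [Set.indicator_of_mem hps, hprodeq]
      have h1 : (1:ℝ) ≤ Real.exp (t * ((∑ r, S.indicator (fun _ => (1:ℝ)) (ps r)) - a)) :=
        Real.one_le_exp (hE ps hps)
      have hp0 : 0 ≤ ∏ r, w (ps r) := Finset.prod_nonneg fun r _ => hw _
      nlinarith
    · rw [Set.indicator_of_notMem hps]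
      exact Finset.prod_nonneg fun r _ => mul_nonneg (hw _) (Real.exp_pos _).le
  rw [factorize w (fun p => Real.exp (t * (S.indicator (fun _ => (1:ℝ)) p - a / R))) R] at step1
  -- step 2 : compute the single-coordinate mgf
  have step2 : ∑ p, w p * Real.exp (t * (S.indicator (fun _ => (1:ℝ)) p - a / R))
      = Real.exp (-(t * a / R)) * (Real.exp t * μ + (1 - μ)) := by
    have hpt : ∀ p, w p * Real.exp (t * (S.indicator (fun _ => (1:ℝ)) p - a / R))
        = Real.exp (-(t * a / R)) * (Real.exp t * S.indicator w p + (w p - S.indicator w p)) := by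
      intro p
      by_cases hp : p ∈ S
      · rw [Set.indicator_of_mem hp, Set.indicator_of_mem hp,
          show t * ((1:ℝ) - a / R) = t + -(t * a / R) by ring, Real.exp_add]
        ring
      · rw [Set.indicator_of_notMem hp, Set.indicator_of_notMem hp,
          show t * ((0:ℝ) - a / R) = -(t * a / R) by ring]
        ring
    rw [Finset.sum_congr rfl fun p _ => hpt p, ← Finset.mul_sum, Finset.sum_add_distrib,
      ← Finset.mul_sum, Finset.sum_sub_distrib, hw1, ← hμdef]
  rw [step2] at step1
  -- step 3 : bound the base and take the power
  have hbase0 : 0 ≤ Real.exp (-(t * a / R)) * (Real.exp t * μ + (1 - μ)) := by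
    have h1 : 0 ≤ Real.exp t * μ + (1 - μ) := by nlinarith [Real.exp_pos t]
    exact mul_nonneg (Real.exp_pos _).le h1
  have hbase : Real.exp (-(t * a / R)) * (Real.exp t * μ + (1 - μ))
      ≤ Real.exp (-(t * a / R) + μ * (Real.exp t - 1)) := by
    rw [Real.exp_add]
    have h1 : Real.exp t * μ + (1 - μ) = μ * (Real.exp t - 1) + 1 := by ring
    have h2 : μ * (Real.exp t - 1) + 1 ≤ Real.exp (μ * (Real.exp t - 1)) :=
      Real.add_one_le_exp _
    nlinarith [Real.exp_pos (-(t * a / R))]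
  calc P w R E ≤ (Real.exp (-(t * a / R)) * (Real.exp t * μ + (1 - μ))) ^ R := step1
    _ ≤ (Real.exp (-(t * a / R) + μ * (Real.exp t - 1))) ^ R := pow_le_pow_left₀ hbase0 hbase R
    _ = Real.exp (-(t * a) + (R:ℝ) * μ * (Real.exp t - 1)) := by
        rw [← Real.exp_nat_mul]
        congr 1
        field_simp




/-- The heart of the argument: a per-pair deviation bound weighted by the mean. -/
lemma pair (w : α → ℝ) (hw : ∀ p, 0 ≤ w p) (hw1 : ∑ p, w p = 1)
    (S : Set α) (R : ℕ) (ε : ℝ) (hε : 0 < ε) (hε1 : ε ≤ 1)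
    (h1 : 1 ≤ ε * R) (h2 : 4 ≤ (R:ℝ) * ε ^ 2) (h3 : 8 / ε ≤ ε * R) :
    P w R {ps : Fin R → α | ¬ |(∑ p, S.indicator w p) -
        (∑ r, S.indicator (fun _ => (1:ℝ)) (ps r)) / (R:ℝ)| ≤ ε}
      ≤ (∑ p, S.indicator w p) *
        (Real.exp 2 / ε * Real.exp (-(ε * R)) + 2 * Real.exp (-((R:ℝ) * ε ^ 2 / 8))) := by
  classical
  have hR0 : (0:ℝ) < (R:ℝ) := by nlinarith
  have hμ0' : 0 ≤ ∑ p, S.indicator w p :=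
    Finset.sum_nonneg fun p _ => Set.indicator_nonneg (fun p _ => hw p) p
  have hμ1' : ∑ p, S.indicator w p ≤ 1 := by
    rw [← hw1]
    exact Finset.sum_le_sum fun p _ => Set.indicator_le_self' (fun p _ => hw p) p
  have hcnt0' : ∀ ps : Fin R → α, 0 ≤ ∑ r, S.indicator (fun _ => (1:ℝ)) (ps r) := fun ps =>
    Finset.sum_nonneg fun r _ => Set.indicator_nonneg (fun _ _ => zero_le_one) _
  -- abstract the mean and the counting function
  set μ : ℝ := ∑ p, S.indicator w p with hμdef
  set cnt : (Fin R → α) → ℝ := fun ps => ∑ r, S.indicator (fun _ => (1:ℝ)) (ps r) with hcntdef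
  have hμ0 : 0 ≤ μ := hμ0'
  have hμ1 : μ ≤ 1 := hμ1'
  have hcnt0 : ∀ ps, 0 ≤ cnt ps := hcnt0'
  have htail' : ∀ (t a : ℝ) (E : Set (Fin R → α)),
      (∀ ps ∈ E, 0 ≤ t * (cnt ps - a)) →
      P w R E ≤ Real.exp (-(t * a) + (R:ℝ) * μ * (Real.exp t - 1)) := by
    intro t a E hE
    exact tail w hw hw1 S R hR0 t a E hE
  set Bad : Set (Fin R → α) := {ps : Fin R → α | ¬ |μ - cnt ps / (R:ℝ)| ≤ ε} with hBaddef
  have hBadmem : ∀ ps, ps ∈ Bad ↔ ¬ |μ - cnt ps / (R:ℝ)| ≤ ε := fun ps => Iff.rfl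
  have hwS0 : (0:ℝ) = μ → ∀ p ∈ S, w p = 0 := by
    intro hμz p hp
    have hz : ∀ q ∈ (Finset.univ : Finset α), S.indicator w q = 0 :=
      (Finset.sum_eq_zero_iff_of_nonneg
        (fun q _ => Set.indicator_nonneg (fun q _ => hw q) q)).1 (hμdef ▸ hμz.symm)
    have := hz p (Finset.mem_univ p)
    rwa [Set.indicator_of_mem hp] at this
  have hcntzero : ∀ ps : Fin R → α, (∀ r, ps r ∉ S) → cnt ps = 0 := by
    intro ps hall
    rw [hcntdef]
    exact Finset.sum_eq_zero fun r _ => Set.indicator_of_notMem (hall r) _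
  clear_value μ cnt
  clear hμ0' hμ1' hcnt0' hcntdef hμdef
  have hD0 : 0 ≤ Real.exp 2 / ε * Real.exp (-(ε * R)) + 2 * Real.exp (-((R:ℝ) * ε ^ 2 / 8)) := by
    positivity
  rcases eq_or_lt_of_le hμ0 with hμz | hμpos
  · -- μ = 0 : no path in the support hits S
    have hzero : P w R Bad = 0 := by
      refine Finset.sum_eq_zero fun ps _ => ?_
      by_cases hps : ps ∈ Bad
      · rw [Set.indicator_of_mem hps]
        rw [hBadmem] at hps
        have hcpos : 0 < cnt ps := by
          rcases (hcnt0 ps).eq_or_lt with h | h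
          · exfalso; apply hps
            rw [← hμz, ← h]
            simpa using hε.le
          · exact h
        obtain ⟨r, hr⟩ : ∃ r, ps r ∈ S := by
          by_contra hall
          push_neg at hall
          have := hcntzero ps hall
          linarith
        exact Finset.prod_eq_zero (Finset.mem_univ r) (hwS0 hμz _ hr)
      · rw [Set.indicator_of_notMem hps]
    rw [hzero, ← hμz, zero_mul]
  · by_cases hcase : Real.exp 2 * μ ≤ ε
    · -- small μ
      set t : ℝ := Real.log (ε / μ) with htdef
      have hεμ : (0:ℝ) < ε / μ := by positivity
      have het : Real.exp t = ε / μ := Real.exp_log hεμ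
      have ht2 : 2 ≤ t := (Real.le_log_iff_exp_le hεμ).2 (by
        rw [le_div_iff₀ hμpos]; linarith)
      clear_value t
      have hsub : ∀ ps ∈ Bad, 0 ≤ t * (cnt ps - ε * R) := by
        intro ps hps
        rw [hBadmem] at hps
        have habs : ε < |μ - cnt ps / R| := not_le.1 hps
        have hup : ε * R ≤ cnt ps := by
          rcases lt_abs.1 habs with h | h
          · exfalso
            have hlt : cnt ps / R < μ - ε := by linarith
            have h0 : 0 ≤ cnt ps / R := div_nonneg (hcnt0 ps) hR0.le
            have hμε : μ ≤ ε := by nlinarith [Real.add_one_le_exp (2:ℝ)]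
            linarith
          · have hlt : μ + ε < cnt ps / R := by linarith
            have hεle : ε ≤ cnt ps / R := by linarith
            calc ε * R ≤ (cnt ps / R) * R := by nlinarith
              _ = cnt ps := by field_simp
        exact mul_nonneg (by linarith) (by linarith)
      have htail := htail' t (ε * R) Bad hsub
      have hrhs : μ * (Real.exp 2 / ε * Real.exp (-(ε * R)))
          = Real.exp (Real.log μ + 2 - Real.log ε - ε * R) := by
        rw [show Real.log μ + 2 - Real.log ε - ε * (R:ℝ)
            = Real.log μ + (2 + (-(ε * (R:ℝ)) + -Real.log ε)) by ring,
          Real.exp_add, Real.exp_add, Real.exp_add, Real.exp_log hμpos,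
          Real.exp_neg (Real.log ε), Real.exp_log hε]
        ring
      have hscal : -(t * (ε * R)) + (R:ℝ) * μ * (Real.exp t - 1)
          ≤ Real.log μ + 2 - Real.log ε - ε * R := by
        have hμexp : (R:ℝ) * μ * (Real.exp t - 1) = ε * R - μ * R := by
          rw [het]; field_simp
        have ht2' : 2 ≤ Real.log ε - Real.log μ := by
          have h := ht2
          rw [htdef, Real.log_div hε.ne' hμpos.ne'] at h
          exact h
        rw [hμexp, htdef, Real.log_div hε.ne' hμpos.ne']
        have hμR : 0 ≤ μ * (R:ℝ) := by positivity
        nlinarith [mul_nonneg (sub_nonneg.2 h1) (sub_nonneg.2 ht2')]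
      calc P w R Bad ≤ Real.exp (-(t * (ε * R)) + (R:ℝ) * μ * (Real.exp t - 1)) := htail
        _ ≤ μ * (Real.exp 2 / ε * Real.exp (-(ε * R))) := by
            rw [hrhs]; exact Real.exp_le_exp.2 hscal
        _ ≤ μ * (Real.exp 2 / ε * Real.exp (-(ε * R)) + 2 * Real.exp (-((R:ℝ) * ε ^ 2 / 8))) := by
            nlinarith [Real.exp_pos (-((R:ℝ) * ε ^ 2 / 8))]
    · -- large μ : ε < e² μ
      push_neg at hcase
      set μ' : ℝ := max μ (ε / 2) with hμ'def
      have hμ'l : ε / 2 ≤ μ' := le_max_right _ _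
      have hμ'μ : μ ≤ μ' := le_max_left _ _
      have hμ'cases : μ' = μ ∨ (μ' = ε / 2 ∧ μ < ε / 2) := by
        rcases le_or_gt (ε / 2) μ with hc | hc
        · exact Or.inl (max_eq_left (by linarith))
        · exact Or.inr ⟨max_eq_right hc.le, hc⟩
      clear_value μ'
      have hμ'0 : 0 < μ' := lt_of_lt_of_le (by positivity) hμ'l
      have hμ'1 : μ' ≤ 1 := by
        rcases hμ'cases with h | ⟨h, _⟩ <;> rw [h] <;> linarith
      set l : ℝ := ε / (2 * μ') with hldef
      have hl0 : 0 < l := by rw [hldef]; positivity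
      have hl1 : l ≤ 1 := by
        rw [hldef, div_le_one (by positivity)]; linarith
      have hlsq : μ' * l ^ 2 = ε ^ 2 / (4 * μ') := by
        rw [hldef]; field_simp; ring
      have hlε : l * ε = ε ^ 2 / (2 * μ') := by
        rw [hldef]; field_simp
      clear_value l
      set Up : Set (Fin R → α) := {ps : Fin R → α | (μ + ε) * R ≤ cnt ps} with hUpdef
      set Lo : Set (Fin R → α) := {ps : Fin R → α | cnt ps ≤ (μ - ε) * R} with hLodef
      have hUpmem : ∀ ps, ps ∈ Up ↔ (μ + ε) * R ≤ cnt ps := fun ps => Iff.rfl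
      have hLomem : ∀ ps, ps ∈ Lo ↔ cnt ps ≤ (μ - ε) * R := fun ps => Iff.rfl
      clear_value Up Lo Bad
      have hsplit : P w R Bad ≤ P w R Up + P w R Lo := by
        rw [P, P, P, ← Finset.sum_add_distrib]
        refine Finset.sum_le_sum fun ps _ => ?_
        have hnn : (0:ℝ) ≤ ∏ r, w (ps r) := Finset.prod_nonneg fun r _ => hw _
        have hUnn : (0:ℝ) ≤ Up.indicator (fun ps => ∏ r, w (ps r)) ps :=
          Set.indicator_nonneg (fun _ _ => Finset.prod_nonneg fun r _ => hw _) _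
        have hLnn : (0:ℝ) ≤ Lo.indicator (fun ps => ∏ r, w (ps r)) ps :=
          Set.indicator_nonneg (fun _ _ => Finset.prod_nonneg fun r _ => hw _) _
        by_cases hps : ps ∈ Bad
        · rw [Set.indicator_of_mem hps]
          rw [hBadmem] at hps
          have habs : ε < |μ - cnt ps / R| := not_le.1 hps
          rcases lt_abs.1 habs with h | h
          · have hmem : ps ∈ Lo := by
              rw [hLomem]
              have hlt : cnt ps / R < μ - ε := by linarith
              have := (div_lt_iff₀ hR0).1 hlt
              linarith
            rw [Set.indicator_of_mem hmem]
            linarith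
          · have hmem : ps ∈ Up := by
              rw [hUpmem]
              have hlt : μ + ε < cnt ps / R := by linarith
              have := (lt_div_iff₀ hR0).1 hlt
              linarith
            rw [Set.indicator_of_mem hmem]
            linarith
        · rw [Set.indicator_of_notMem hps]
          linarith
      have hUp := htail' l ((μ + ε) * R) Up (by
        intro ps hps
        rw [hUpmem] at hps
        exact mul_nonneg hl0.le (by linarith))
      have hLo := htail' (-l) ((μ - ε) * R) Lo (by
        intro ps hps
        rw [hLomem] at hps
        have h := sub_nonpos.2 hps
        nlinarith)
      have hexpUp : -(l * ((μ + ε) * R)) + (R:ℝ) * μ * (Real.exp l - 1)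
          ≤ -((R:ℝ) * ε ^ 2 / (4 * μ')) := by
        have hq := exp_le_quadratic (x := l) (abs_le.2 ⟨by linarith, hl1⟩)
        have hμl2 : μ * l ^ 2 ≤ μ' * l ^ 2 := by nlinarith
        have hm1 : (R:ℝ) * μ * (Real.exp l - 1) ≤ (R:ℝ) * μ * (l + l ^ 2) :=
          mul_le_mul_of_nonneg_left (by linarith) (by positivity)
        have hm2 := mul_le_mul_of_nonneg_left hμl2 hR0.le
        have key : -(l * ((μ + ε) * R)) + (R:ℝ) * μ * (Real.exp l - 1)
            ≤ (R:ℝ) * (μ' * l ^ 2 - l * ε) := by nlinarith [hm1, hm2]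
        rw [hlsq, hlε] at key
        calc -(l * ((μ + ε) * R)) + (R:ℝ) * μ * (Real.exp l - 1)
            ≤ (R:ℝ) * (ε ^ 2 / (4 * μ') - ε ^ 2 / (2 * μ')) := key
          _ = -((R:ℝ) * ε ^ 2 / (4 * μ')) := by field_simp; ring
      have hexpLo : -((-l) * ((μ - ε) * R)) + (R:ℝ) * μ * (Real.exp (-l) - 1)
          ≤ -((R:ℝ) * ε ^ 2 / (4 * μ')) := by
        have hq := exp_le_quadratic (x := -l) (abs_le.2 ⟨by linarith, by linarith⟩)
        have hμl2 : μ * l ^ 2 ≤ μ' * l ^ 2 := by nlinarith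
        have hm1 : (R:ℝ) * μ * (Real.exp (-l) - 1) ≤ (R:ℝ) * μ * (l ^ 2 - l) :=
          mul_le_mul_of_nonneg_left (by nlinarith) (by positivity)
        have hm2 := mul_le_mul_of_nonneg_left hμl2 hR0.le
        have key : -((-l) * ((μ - ε) * R)) + (R:ℝ) * μ * (Real.exp (-l) - 1)
            ≤ (R:ℝ) * (μ' * l ^ 2 - l * ε) := by nlinarith [hm1, hm2]
        rw [hlsq, hlε] at key
        calc -((-l) * ((μ - ε) * R)) + (R:ℝ) * μ * (Real.exp (-l) - 1)
            ≤ (R:ℝ) * (ε ^ 2 / (4 * μ') - ε ^ 2 / (2 * μ')) := key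
          _ = -((R:ℝ) * ε ^ 2 / (4 * μ')) := by field_simp; ring
      have hA : P w R Up ≤ Real.exp (-((R:ℝ) * ε ^ 2 / (4 * μ'))) :=
        le_trans hUp (Real.exp_le_exp.2 hexpUp)
      have hB : P w R Lo ≤ Real.exp (-((R:ℝ) * ε ^ 2 / (4 * μ'))) :=
        le_trans hLo (Real.exp_le_exp.2 hexpLo)
      have hkey : Real.exp (-((R:ℝ) * ε ^ 2 / (8 * μ'))) ≤ μ := by
        rw [show μ = Real.exp (Real.log μ) from (Real.exp_log hμpos).symm]
        apply Real.exp_le_exp.2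
        rw [neg_le, le_div_iff₀ (by positivity : (0:ℝ) < 8 * μ')]
        rcases hμ'cases with hμ'eq | ⟨hμ'eq, hc⟩
        · rw [hμ'eq]
          have hml := mul_neg_log_le hμpos hμ1
          nlinarith
        · rw [hμ'eq]
          have hμlow : ε / Real.exp 2 < μ := by
            rw [div_lt_iff₀ (Real.exp_pos 2)]; linarith
          have hlogμ : Real.log ε - 2 ≤ Real.log μ := by
            have h := Real.log_le_log (by positivity) hμlow.le
            rwa [Real.log_div hε.ne' (Real.exp_pos 2).ne', Real.log_exp] at h
          have hlogε : -Real.log ε ≤ 1 / ε - 1 := by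
            have h := Real.log_le_sub_one_of_pos (show (0:ℝ) < ε⁻¹ by positivity)
            rw [Real.log_inv] at h
            rw [one_div]
            linarith
          have h8 : 8 ≤ (R:ℝ) * ε ^ 2 := by
            have h := mul_le_mul_of_nonneg_right h3 hε.le
            rw [div_mul_cancel₀ _ hε.ne'] at h
            nlinarith
          have hεinv : ε * (1 / ε) = 1 := by field_simp
          nlinarith [mul_le_mul_of_nonneg_left hlogε hε.le,
            mul_le_mul_of_nonneg_left (show -Real.log μ ≤ 2 - Real.log ε by linarith) hε.le]
      have hexp1 : Real.exp (-((R:ℝ) * ε ^ 2 / (8 * μ'))) ≤ Real.exp (-((R:ℝ) * ε ^ 2 / 8)) := by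
        apply Real.exp_le_exp.2
        rw [neg_le_neg_iff, div_le_div_iff₀ (by positivity) (by positivity)]
        nlinarith [mul_nonneg (mul_nonneg hR0.le (sq_nonneg ε)) (sub_nonneg.2 hμ'1)]
      have hprod : Real.exp (-((R:ℝ) * ε ^ 2 / (4 * μ')))
          = Real.exp (-((R:ℝ) * ε ^ 2 / (8 * μ'))) * Real.exp (-((R:ℝ) * ε ^ 2 / (8 * μ'))) := by
        rw [← Real.exp_add]
        congr 1
        field_simp
        ring
      have hfin : Real.exp (-((R:ℝ) * ε ^ 2 / (4 * μ'))) ≤ μ * Real.exp (-((R:ℝ) * ε ^ 2 / 8)) := by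
        rw [hprod]
        exact mul_le_mul hkey hexp1 (Real.exp_pos _).le hμ0
      calc P w R Bad ≤ P w R Up + P w R Lo := hsplit
        _ ≤ 2 * Real.exp (-((R:ℝ) * ε ^ 2 / (4 * μ'))) := by linarith
        _ ≤ μ * (2 * Real.exp (-((R:ℝ) * ε ^ 2 / 8))) := by linarith
        _ ≤ μ * (Real.exp 2 / ε * Real.exp (-(ε * R)) + 2 * Real.exp (-((R:ℝ) * ε ^ 2 / 8))) := by
            have hterm : 0 ≤ Real.exp 2 / ε * Real.exp (-(ε * R)) := by positivity
            exact mul_le_mul_of_nonneg_left (by linarith) hμ0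




lemma count_pairs {V : Type} [Fintype V] [DecidableEq V] (T : ℕ) (φ : (Fin (T+1) → V) → ℝ)
    (hφ : ∀ p, 0 ≤ φ p) (hφ1 : ∑ p, φ p = 1) :
    ∑ uv ∈ Finset.univ.filter (fun uv : V × V => uv.1 ≠ uv.2),
      (∑ p, Set.indicator {q : Fin (T+1) → V | uv.1 ∈ Set.range q ∧ uv.2 ∈ Set.range q} φ p)
      ≤ ((T:ℝ) + 1) ^ 2 := by
  classical
  rw [Finset.sum_comm]
  have hbound : ∀ p : Fin (T+1) → V,
      ∑ uv ∈ Finset.univ.filter (fun uv : V × V => uv.1 ≠ uv.2),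
        Set.indicator {q : Fin (T+1) → V | uv.1 ∈ Set.range q ∧ uv.2 ∈ Set.range q} φ p
      ≤ ((T:ℝ) + 1) ^ 2 * φ p := by
    intro p
    set s := Finset.univ.filter (fun uv : V × V => uv.1 ≠ uv.2) with hs
    have h1 : ∑ uv ∈ s,
        Set.indicator {q : Fin (T+1) → V | uv.1 ∈ Set.range q ∧ uv.2 ∈ Set.range q} φ p
        = ∑ uv ∈ s, (if uv.1 ∈ Set.range p ∧ uv.2 ∈ Set.range p then φ p else 0) := by
      refine Finset.sum_congr rfl fun uv _ => ?_
      simp only [Set.indicator_apply, Set.mem_setOf_eq]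
    have h2 := Finset.sum_filter (s := s)
      (p := fun uv : V × V => uv.1 ∈ Set.range p ∧ uv.2 ∈ Set.range p)
      (f := fun _ : V × V => φ p)
    rw [h1, ← h2, Finset.sum_const, nsmul_eq_mul]
    have hsub : s.filter (fun uv => uv.1 ∈ Set.range p ∧ uv.2 ∈ Set.range p)
        ⊆ (Finset.univ.image p) ×ˢ (Finset.univ.image p) := by
      intro uv huv
      rw [Finset.mem_filter] at huv
      obtain ⟨⟨i, hi⟩, ⟨j, hj⟩⟩ := huv.2
      rw [Finset.mem_product]
      constructor <;> rw [Finset.mem_image]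
      · exact ⟨i, Finset.mem_univ i, hi⟩
      · exact ⟨j, Finset.mem_univ j, hj⟩
    have hcard : (s.filter (fun uv => uv.1 ∈ Set.range p ∧ uv.2 ∈ Set.range p)).card
        ≤ (T + 1) * (T + 1) := by
      calc _ ≤ ((Finset.univ.image p) ×ˢ (Finset.univ.image p)).card :=
            Finset.card_le_card hsub
        _ = (Finset.univ.image p).card * (Finset.univ.image p).card := Finset.card_product _ _
        _ ≤ (T + 1) * (T + 1) := by
            have := Finset.card_image_le (s := (Finset.univ : Finset (Fin (T+1)))) (f := p)
            rw [Finset.card_univ, Fintype.card_fin] at this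
            exact Nat.mul_le_mul this this
    have hcardR : ((s.filter (fun uv => uv.1 ∈ Set.range p ∧ uv.2 ∈ Set.range p)).card : ℝ)
        ≤ ((T:ℝ) + 1) ^ 2 := by
      have := (Nat.cast_le (α := ℝ)).2 hcard
      push_cast at this
      nlinarith [this]
    exact mul_le_mul_of_nonneg_right hcardR (hφ p)
  calc ∑ p, ∑ uv ∈ Finset.univ.filter (fun uv : V × V => uv.1 ≠ uv.2),
        Set.indicator {q : Fin (T+1) → V | uv.1 ∈ Set.range q ∧ uv.2 ∈ Set.range q} φ p
      ≤ ∑ p, ((T:ℝ) + 1) ^ 2 * φ p := Finset.sum_le_sum fun p _ => hbound p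
    _ = ((T:ℝ) + 1) ^ 2 := by rw [← Finset.mul_sum, hφ1, mul_one]

end PantherAux



/-- Sample-size guarantee for Panther's random path sampling: there is a universal
constant `c > 0` such that for any nonempty finite vertex set `V`, path length
`T ≥ 1`, probability distribution `φ` on `T`-paths, and `ε, δ ∈ (0,1)`, if
`R ≥ (c/ε²)·(log₂ C(T+1,2) + 1 + ln(1/δ))` then, with probability at least `1 - δ`
over an i.i.d. sample of `R` paths from `φ`, simultaneously for all distinct
vertices `u, v` the empirical path similarity `#{r : pᵣ ∈ P_{u,v}}/R` is within `ε`
of `φ(P_{u,v})`, the probability that a random path contains both `u` and `v`. -/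
theorem panther_sample_size : ∃ c : ℝ, 0 < c ∧
    ∀ (V : Type) (_ : Fintype V) (_ : Nonempty V) (T : ℕ), 1 ≤ T →
      ∀ (φ : (Fin (T + 1) → V) → ℝ),
        (∀ p, 0 ≤ φ p) → (∑ p, φ p = 1) →
      ∀ ε δ : ℝ, ε ∈ Set.Ioo (0 : ℝ) 1 → δ ∈ Set.Ioo (0 : ℝ) 1 →
      ∀ R : ℕ,
        (c / ε ^ 2) * (Real.logb 2 (((T + 1).choose 2 : ℝ)) + 1 + Real.log (1 / δ))
          ≤ (R : ℝ) →
      1 - δ ≤ ∑ ps : Fin R → (Fin (T + 1) → V),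
        Set.indicator
          {ps : Fin R → (Fin (T + 1) → V) | ∀ u v : V, u ≠ v →
            |(∑ p, Set.indicator
                {q : Fin (T + 1) → V | u ∈ Set.range q ∧ v ∈ Set.range q} φ p) -
              (∑ r, Set.indicator
                {q : Fin (T + 1) → V | u ∈ Set.range q ∧ v ∈ Set.range q}
                (fun _ => (1 : ℝ)) (ps r)) / (R : ℝ)| ≤ ε}
          (fun ps => ∏ r, φ (ps r)) ps := by
  classical
  refine ⟨100, by norm_num, ?_⟩
  intro V _ _ T hT φ hφ hφ1 ε δ hεmem hδmem R hR
  obtain ⟨hε0, hε1⟩ := hεmem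
  obtain ⟨hδ0, hδ1⟩ := hδmem
  -- basic quantities
  set C : ℝ := (((T + 1).choose 2 : ℕ) : ℝ) with hCdef
  set L : ℝ := Real.logb 2 C + 1 + Real.log (1 / δ) with hLdef
  have hC1 : (1:ℝ) ≤ C := by
    rw [hCdef]
    exact_mod_cast Nat.succ_le_of_lt (Nat.choose_pos (by omega))
  have hCval : ((T:ℝ) + 1) ≤ 2 * C := by
    rw [hCdef, Nat.cast_choose_two]
    push_cast
    nlinarith [hT, (by exact_mod_cast hT : (1:ℝ) ≤ (T:ℝ))]
  have hlogb0 : 0 ≤ Real.logb 2 C := Real.logb_nonneg (by norm_num) hC1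
  have hlogδ : 0 < Real.log (1 / δ) := Real.log_pos (by rw [lt_div_iff₀ hδ0]; linarith)
  have hL1 : 1 ≤ L := by rw [hLdef]; linarith
  have hL0 : 0 < L := by linarith
  have hRL : 100 * L ≤ (R:ℝ) * ε ^ 2 := by
    have h := mul_le_mul_of_nonneg_right hR (sq_nonneg ε)
    rw [hLdef] at h ⊢
    calc 100 * (Real.logb 2 C + 1 + Real.log (1 / δ))
        = 100 / ε ^ 2 * (Real.logb 2 C + 1 + Real.log (1 / δ)) * ε ^ 2 := by
          field_simp
      _ ≤ (R:ℝ) * ε ^ 2 := h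
  have hεR2 : 100 ≤ (R:ℝ) * ε ^ 2 := by nlinarith
  have hR0 : (0:ℝ) < (R:ℝ) := by nlinarith [sq_nonneg ε, hεR2]
  have h1 : 1 ≤ ε * R := by nlinarith
  have h2 : 4 ≤ (R:ℝ) * ε ^ 2 := by linarith
  have h3 : 8 / ε ≤ ε * R := by
    rw [div_le_iff₀ hε0]
    nlinarith
  -- the events
  set Bad : V × V → Set (Fin R → (Fin (T + 1) → V)) := fun uv =>
    {ps : Fin R → (Fin (T + 1) → V) | ¬ |(∑ p, Set.indicator
        {q : Fin (T + 1) → V | uv.1 ∈ Set.range q ∧ uv.2 ∈ Set.range q} φ p) -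
      (∑ r, Set.indicator
        {q : Fin (T + 1) → V | uv.1 ∈ Set.range q ∧ uv.2 ∈ Set.range q}
        (fun _ => (1 : ℝ)) (ps r)) / (R : ℝ)| ≤ ε} with hBaddef
  set G : Set (Fin R → (Fin (T + 1) → V)) :=
    {ps : Fin R → (Fin (T + 1) → V) | ∀ u v : V, u ≠ v →
      |(∑ p, Set.indicator
          {q : Fin (T + 1) → V | u ∈ Set.range q ∧ v ∈ Set.range q} φ p) -
        (∑ r, Set.indicator
          {q : Fin (T + 1) → V | u ∈ Set.range q ∧ v ∈ Set.range q}
          (fun _ => (1 : ℝ)) (ps r)) / (R : ℝ)| ≤ ε} with hGdef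
  set s : Finset (V × V) := Finset.univ.filter (fun uv : V × V => uv.1 ≠ uv.2) with hsdef
  have hGc : ∀ ps ∈ Gᶜ, ∃ uv ∈ s, ps ∈ Bad uv := by
    intro ps hps
    rw [Set.mem_compl_iff, hGdef, Set.mem_setOf_eq] at hps
    push_neg at hps
    obtain ⟨u, v, huv, hbad⟩ := hps
    refine ⟨(u, v), ?_, ?_⟩
    · rw [hsdef, Finset.mem_filter]
      exact ⟨Finset.mem_univ _, huv⟩
    · show ps ∈ Bad (u, v)
      rw [hBaddef]
      simp only [Set.mem_setOf_eq]
      exact not_le.2 hbad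
  have hub : PantherAux.P φ R Gᶜ ≤ ∑ uv ∈ s, PantherAux.P φ R (Bad uv) :=
    PantherAux.P_le_sum φ hφ R s Bad Gᶜ hGc
  set D : ℝ := Real.exp 2 / ε * Real.exp (-(ε * R)) + 2 * Real.exp (-((R:ℝ) * ε ^ 2 / 8))
    with hDdef
  have hD0 : 0 ≤ D := by rw [hDdef]; positivity
  have hpair : ∀ uv ∈ s, PantherAux.P φ R (Bad uv) ≤
      (∑ p, Set.indicator
        {q : Fin (T + 1) → V | uv.1 ∈ Set.range q ∧ uv.2 ∈ Set.range q} φ p) * D := by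
    intro uv _
    rw [hBaddef, hDdef]
    exact PantherAux.pair φ hφ hφ1 _ R ε hε0 hε1.le h1 h2 h3
  have hcount := PantherAux.count_pairs (V := V) T φ hφ hφ1
  have hsumbound : ∑ uv ∈ s, PantherAux.P φ R (Bad uv) ≤ ((T:ℝ) + 1) ^ 2 * D := by
    calc ∑ uv ∈ s, PantherAux.P φ R (Bad uv)
        ≤ ∑ uv ∈ s, (∑ p, Set.indicator
            {q : Fin (T + 1) → V | uv.1 ∈ Set.range q ∧ uv.2 ∈ Set.range q} φ p) * D :=
          Finset.sum_le_sum hpair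
      _ = (∑ uv ∈ s, ∑ p, Set.indicator
            {q : Fin (T + 1) → V | uv.1 ∈ Set.range q ∧ uv.2 ∈ Set.range q} φ p) * D :=
          (Finset.sum_mul _ _ _).symm
      _ ≤ ((T:ℝ) + 1) ^ 2 * D := mul_le_mul_of_nonneg_right (by rw [hsdef] at *; exact hcount) hD0
  -- numeric bound : ((T+1))^2 * D ≤ δ
  have hM0 : (0:ℝ) < ((T:ℝ) + 1) ^ 2 := by positivity
  have hlogT : Real.log ((T:ℝ) + 1) ≤ Real.logb 2 C + 1 := by
    have hlog2C : Real.log ((T:ℝ) + 1) ≤ Real.log 2 + Real.log C := by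
      rw [← Real.log_mul (by norm_num) (by linarith)]
      exact Real.log_le_log (by positivity) hCval
    have hlog2 : Real.log 2 < 1 := by
      have := Real.log_two_lt_d9
      linarith
    have hlogC0 : 0 ≤ Real.log C := Real.log_nonneg hC1
    have hlb : Real.log C ≤ Real.logb 2 C := by
      rw [Real.logb, le_div_iff₀ (Real.log_pos (by norm_num))]
      nlinarith
    linarith
  have hlogM : Real.log (((T:ℝ) + 1) ^ 2) = 2 * Real.log ((T:ℝ) + 1) := by
    rw [Real.log_pow]; push_cast; ring
  have hlogε : -Real.log ε ≤ 1 / ε - 1 := by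
    have h := Real.log_le_sub_one_of_pos (show (0:ℝ) < ε⁻¹ by positivity)
    rw [Real.log_inv] at h
    rw [one_div]
    linarith
  have hlog1δ : Real.log (1 / δ) = -Real.log δ := by
    rw [one_div, Real.log_inv]
  have ht1 : ((T:ℝ) + 1) ^ 2 * (Real.exp 2 / ε * Real.exp (-(ε * R))) ≤ δ / 2 := by
    have heq : ((T:ℝ) + 1) ^ 2 * (Real.exp 2 / ε * Real.exp (-(ε * R)))
        = Real.exp (Real.log (((T:ℝ) + 1) ^ 2) + 2 + -Real.log ε + -(ε * R)) := by
      rw [Real.exp_add, Real.exp_add, Real.exp_add, Real.exp_log hM0,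
        Real.exp_neg (Real.log ε), Real.exp_log hε0]
      ring
    have heq2 : δ / 2 = Real.exp (-Real.log (1 / δ) - Real.log 2) := by
      have hneg : -Real.log (1 / δ) = Real.log δ := by rw [hlog1δ, neg_neg]
      rw [hneg, Real.exp_sub, Real.exp_log hδ0, Real.exp_log (by norm_num : (0:ℝ) < 2)]
    rw [heq, heq2]
    apply Real.exp_le_exp.2
    -- scalar inequality
    have hεR : 7 * L + 1 / ε ≤ ε * R := by
      have key : (7 * L + 1 / ε) * ε ≤ 100 * L := by
        have hexp : (7 * L + 1 / ε) * ε = 7 * L * ε + 1 := by field_simp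
        rw [hexp]
        nlinarith [mul_nonneg hL0.le (sub_nonneg.2 hε1.le)]
      have h100 : 100 * L ≤ ε * (R:ℝ) * ε := by nlinarith
      exact le_of_mul_le_mul_right (le_trans key h100) hε0
    have hlog2' : Real.log 2 ≤ 1 := by nlinarith [Real.log_two_lt_d9]
    linarith [hlogT, hlogε, hεR, hL1, hlogδ, hlogb0, hlogM, hLdef, hlog2']
  have ht2 : ((T:ℝ) + 1) ^ 2 * (2 * Real.exp (-((R:ℝ) * ε ^ 2 / 8))) ≤ δ / 2 := by
    have heq : ((T:ℝ) + 1) ^ 2 * (2 * Real.exp (-((R:ℝ) * ε ^ 2 / 8)))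
        = Real.exp (Real.log (((T:ℝ) + 1) ^ 2) + Real.log 2 + -((R:ℝ) * ε ^ 2 / 8)) := by
      rw [Real.exp_add, Real.exp_add, Real.exp_log hM0, Real.exp_log (by norm_num : (0:ℝ) < 2)]
      ring
    have heq2 : δ / 2 = Real.exp (-Real.log (1 / δ) - Real.log 2) := by
      have hneg : -Real.log (1 / δ) = Real.log δ := by rw [hlog1δ, neg_neg]
      rw [hneg, Real.exp_sub, Real.exp_log hδ0, Real.exp_log (by norm_num : (0:ℝ) < 2)]
    rw [heq, heq2]
    apply Real.exp_le_exp.2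
    have hlog2' : Real.log 2 ≤ 1 := by nlinarith [Real.log_two_lt_d9]
    have hXL : 100 * (Real.logb 2 C + 1 + Real.log (1 / δ)) ≤ (R:ℝ) * ε ^ 2 := by
      rw [← hLdef]; exact hRL
    linarith [hlogT, hlogδ, hlogb0, hlogM, hlog2', hXL]
  have hnum : ((T:ℝ) + 1) ^ 2 * D ≤ δ := by
    rw [hDdef, mul_add]
    linarith
  -- conclude
  have hcompl := PantherAux.P_add_compl φ hφ1 R G
  have hGcle : PantherAux.P φ R Gᶜ ≤ δ := le_trans hub (le_trans hsumbound hnum)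
  have : 1 - δ ≤ PantherAux.P φ R G := by linarith
  exact this
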